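/- arXiv:2410.16600 — 3 statements merged into one kernel-verified Lean document; each statement's English description precedes it below -/
import Mathlib

section
/- Let A be a real m×d matrix with full row rank m, b ∈ ℝ^m, and let ℓ : ℝ^d → ℝ be convex and differentiable. If μ and z both lie in the set {x ∈ Δ^{d−1} : Ax = b}, then ℓ(μ) − ℓ(z) ≤ √2 · ‖Π_A ∇ℓ(μ)‖₂. -/
open Matrix

/-- Tangent-space projection matrix `Π_A = I − Aᵀ(AAᵀ)⁻¹A`. -/
noncomputable def projMat {m d : ℕ} (A : Matrix (Fin m) (Fin d) ℝ) :
    Matrix (Fin d) (Fin d) ℝ :=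
  1 - Aᵀ * (A * Aᵀ)⁻¹ * A

/-- The gradient of `f : ℝ^d → ℝ` at `x`. -/
noncomputable def grad {d : ℕ} (f : (Fin d → ℝ) → ℝ) (x : Fin d → ℝ) : Fin d → ℝ :=
  fun k => fderiv ℝ f x (Pi.single k 1)

/-- A square matrix of full rank has invertible determinant. -/
lemma isUnit_det_of_rank_eq {m : ℕ} (M : Matrix (Fin m) (Fin m) ℝ) (h : M.rank = m) :
    IsUnit M.det := by
  rw [← Matrix.isUnit_iff_isUnit_det]
  have hsurj : Function.Surjective M.mulVecLin := by
    rw [← LinearMap.range_eq_top]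
    apply Submodule.eq_top_of_finrank_eq
    have : M.rank = Module.finrank ℝ (LinearMap.range M.mulVecLin) := rfl
    rw [← this, h]
    simp [Module.finrank_pi]
  have hbij : Function.Bijective M.mulVecLin :=
    ⟨LinearMap.injective_iff_surjective.mpr hsurj, hsurj⟩
  have hu : IsUnit (Matrix.toLinAlgEquiv' M) := by
    rw [show Matrix.toLinAlgEquiv' M = M.mulVecLin from rfl]
    exact (Module.End.isUnit_iff _).mpr hbij
  have := hu.map (Matrix.toLinAlgEquiv' (R := ℝ) (n := Fin m)).symm.toRingHom.toMonoidHom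
  simpa using this

/-- If `ℓ : ℝ^d → ℝ` is convex and differentiable, `A` has full row rank `m`, and
`μ, z` both lie in `{x ∈ Δ^{d−1} : Ax = b}`, then
`ℓ(μ) − ℓ(z) ≤ √2 ⬝ ‖Π_A ∇ℓ(μ)‖₂`. -/
theorem exploitability_le_sqrt_two_mul_proj_grad_norm
    {m d : ℕ} (A : Matrix (Fin m) (Fin d) ℝ) (hA : A.rank = m)
    (b : Fin m → ℝ) (ℓ : (Fin d → ℝ) → ℝ)
    (hconv : ConvexOn ℝ Set.univ ℓ) (hdiff : Differentiable ℝ ℓ)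
    (μ z : Fin d → ℝ)
    (hμ : μ ∈ stdSimplex ℝ (Fin d)) (hμb : A *ᵥ μ = b)
    (hz : z ∈ stdSimplex ℝ (Fin d)) (hzb : A *ᵥ z = b) :
    ℓ μ - ℓ z ≤
      Real.sqrt 2 * Real.sqrt (∑ k, (projMat A *ᵥ grad ℓ μ) k ^ 2) := by
  set g : Fin d → ℝ := grad ℓ μ with hg
  set v : Fin d → ℝ := μ - z with hv
  -- AAᵀ is invertible
  have hdet : IsUnit (A * Aᵀ).det := by
    apply isUnit_det_of_rank_eq
    rw [Matrix.rank_self_mul_transpose, hA]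
  -- A v = 0
  have hAv : A *ᵥ v = 0 := by
    rw [hv, Matrix.mulVec_sub, hμb, hzb, sub_self]
  -- projection fixes v
  have hPiv : projMat A *ᵥ v = v := by
    rw [projMat, Matrix.sub_mulVec, Matrix.one_mulVec]
    rw [← Matrix.mulVec_mulVec, ← Matrix.mulVec_mulVec, hAv]
    simp
  -- projection is symmetric
  have hPisymm : (projMat A)ᵀ = projMat A := by
    rw [projMat, Matrix.transpose_sub, Matrix.transpose_one, Matrix.transpose_mul,
      Matrix.transpose_mul, Matrix.transpose_transpose, Matrix.transpose_nonsing_inv,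
      Matrix.transpose_mul, Matrix.transpose_transpose, Matrix.mul_assoc]
  -- Step 1 : convexity gradient inequality
  have hgrad : ℓ μ - ℓ z ≤ fderiv ℝ ℓ μ v := by
    set φ : ℝ → ℝ := fun t => ℓ (μ + t • (z - μ)) with hφ
    have hφconv : ConvexOn ℝ Set.univ φ := by
      have := hconv.comp_affineMap (AffineMap.lineMap μ z : ℝ →ᵃ[ℝ] (Fin d → ℝ))
      simp only [Set.preimage_univ] at this
      have heq : (ℓ ∘ ⇑(AffineMap.lineMap μ z)) = φ := by
        funext t
        simp only [Function.comp_apply, AffineMap.lineMap_apply_module, φ]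
        congr 1
        module
      rwa [heq] at this
    have hder : HasDerivAt φ (fderiv ℝ ℓ μ (z - μ)) 0 := by
      have h1 : HasDerivAt (fun t : ℝ => μ + t • (z - μ)) (z - μ) 0 := by
        simpa using ((hasDerivAt_id (0:ℝ)).smul_const (z - μ)).const_add μ
      have h2 : HasFDerivAt ℓ (fderiv ℝ ℓ μ) (μ + (0:ℝ) • (z - μ)) := by
        simpa using (hdiff μ).hasFDerivAt
      exact h2.comp_hasDerivAt 0 h1
    have := hφconv.le_slope_of_hasDerivAt (Set.mem_univ 0) (Set.mem_univ 1)
      zero_lt_one hder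
    rw [slope_def_field] at this
    have hφ0 : φ 0 = ℓ μ := by simp [φ]
    have hφ1 : φ 1 = ℓ z := by simp [φ]
    rw [hφ0, hφ1] at this
    have h3 : fderiv ℝ ℓ μ (z - μ) ≤ ℓ z - ℓ μ := by
      simpa using this
    have h4 : fderiv ℝ ℓ μ v = -(fderiv ℝ ℓ μ (z - μ)) := by
      rw [hv, show μ - z = -(z - μ) by ring, map_neg]
    linarith
  -- fderiv in terms of the gradient
  have hfd : fderiv ℝ ℓ μ v = g ⬝ᵥ v := by
    have := LinearMap.pi_apply_eq_sum_univ
      ((fderiv ℝ ℓ μ : (Fin d → ℝ) →L[ℝ] ℝ) : (Fin d → ℝ) →ₗ[ℝ] ℝ) v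
    rw [show ((fderiv ℝ ℓ μ : (Fin d → ℝ) →L[ℝ] ℝ) : (Fin d → ℝ) →ₗ[ℝ] ℝ) v
        = fderiv ℝ ℓ μ v from rfl] at this
    rw [this]
    simp only [dotProduct]
    refine Finset.sum_congr rfl fun k _ => ?_
    have hsingle : (Pi.single k (1:ℝ) : Fin d → ℝ) = fun j => if k = j then 1 else 0 := by
      ext j; simp [Pi.single_apply, eq_comm]
    simp only [smul_eq_mul, hg, grad, hsingle, ContinuousLinearMap.coe_coe]
    ring
  -- move the projection onto the gradient
  have hproj : g ⬝ᵥ v = (projMat A *ᵥ g) ⬝ᵥ v := by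
    conv_lhs => rw [← hPiv, Matrix.dotProduct_mulVec, ← hPisymm, Matrix.vecMul_transpose]
  -- Cauchy-Schwarz and the simplex diameter bound
  have hCS : (projMat A *ᵥ g) ⬝ᵥ v ≤
      Real.sqrt (∑ k, (projMat A *ᵥ g) k ^ 2) * Real.sqrt (∑ k, v k ^ 2) := by
    have h := Finset.sum_mul_sq_le_sq_mul_sq Finset.univ (fun k => (projMat A *ᵥ g) k)
      (fun k => v k)
    calc (projMat A *ᵥ g) ⬝ᵥ v ≤ |(projMat A *ᵥ g) ⬝ᵥ v| := le_abs_self _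
      _ = Real.sqrt (((projMat A *ᵥ g) ⬝ᵥ v) ^ 2) := (Real.sqrt_sq_eq_abs _).symm
      _ ≤ Real.sqrt ((∑ k, (projMat A *ᵥ g) k ^ 2) * ∑ k, v k ^ 2) :=
          Real.sqrt_le_sqrt h
      _ = _ := Real.sqrt_mul (by positivity) _
  have hvb : Real.sqrt (∑ k, v k ^ 2) ≤ Real.sqrt 2 := by
    apply Real.sqrt_le_sqrt
    have h1 : ∀ k, v k ^ 2 ≤ |μ k - z k| := by
      intro k
      have hμk := hμ.1 k
      have hzk := hz.1 k
      have hμk1 : μ k ≤ 1 := by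
        have := hμ.2
        calc μ k ≤ ∑ j, μ j := Finset.single_le_sum (fun j _ => hμ.1 j) (Finset.mem_univ k)
          _ = 1 := this
      have hzk1 : z k ≤ 1 := by
        calc z k ≤ ∑ j, z j := Finset.single_le_sum (fun j _ => hz.1 j) (Finset.mem_univ k)
          _ = 1 := hz.2
      have habs : |μ k - z k| ≤ 1 := by
        rw [abs_sub_le_iff]; constructor <;> linarith
      calc v k ^ 2 = |μ k - z k| * |μ k - z k| := by
            rw [← abs_mul_abs_self]; simp [hv, sq]
        _ ≤ 1 * |μ k - z k| := by
            apply mul_le_mul_of_nonneg_right habs (abs_nonneg _)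
        _ = |μ k - z k| := one_mul _
    calc ∑ k, v k ^ 2 ≤ ∑ k, |μ k - z k| := Finset.sum_le_sum fun k _ => h1 k
      _ ≤ ∑ k, (μ k + z k) := by
          apply Finset.sum_le_sum
          intro k _
          rw [abs_sub_le_iff]
          constructor <;> nlinarith [hμ.1 k, hz.1 k]
      _ = 2 := by rw [Finset.sum_add_distrib, hμ.2, hz.2]; norm_num
  calc ℓ μ - ℓ z ≤ fderiv ℝ ℓ μ v := hgrad
    _ = g ⬝ᵥ v := hfd
    _ = (projMat A *ᵥ g) ⬝ᵥ v := hproj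
    _ ≤ Real.sqrt (∑ k, (projMat A *ᵥ g) k ^ 2) * Real.sqrt (∑ k, v k ^ 2) := hCS
    _ ≤ Real.sqrt (∑ k, (projMat A *ᵥ g) k ^ 2) * Real.sqrt 2 := by
        apply mul_le_mul_of_nonneg_left hvb (Real.sqrt_nonneg _)
    _ = Real.sqrt 2 * Real.sqrt (∑ k, (projMat A *ᵥ g) k ^ 2) := mul_comm _ _
end

section
/- Let d ≥ 1, let A be a real m×d matrix with full row rank m, let b ∈ ℝ^m, and suppose the feasible set M = {x ∈ Δ^{d−1} : Ax = b} is nonempty. Let ℓ : ℝ^d → ℝ be convex and differentiable, let τ > 0, and define the entropy-regularized loss ℓ^τ(x) = ℓ(x) − τH(x). If μ ∈ M has all coordinates strictly positive, then ℓ(μ) − min_{z ∈ M} ℓ(z) ≤ τ log d + √2 · ‖Π_A ∇ℓ^τ(μ)‖₂. -/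
open Matrix

/-- Shannon entropy `H(x) = −∑ₖ xₖ log xₖ`. -/
noncomputable def shannonEntropy {d : ℕ} (x : Fin d → ℝ) : ℝ :=
  -∑ k, x k * Real.log (x k)

lemma clm_apply_eq_sum {d : ℕ} (L : (Fin d → ℝ) →L[ℝ] ℝ) (v : Fin d → ℝ) :
    L v = ∑ k, v k * L (Pi.single k 1) := by
  have hv : v = ∑ k, v k • (Pi.single k 1 : Fin d → ℝ) := by
    funext j
    simp [Finset.sum_apply, Pi.single_apply]
  calc L v = L (∑ k, v k • (Pi.single k 1 : Fin d → ℝ)) := by rw [← hv]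
    _ = ∑ k, v k * L (Pi.single k 1) := by
        rw [map_sum]; simp [smul_eq_mul]

lemma convex_grad_ineq {d : ℕ} (ℓ : (Fin d → ℝ) → ℝ) (hconv : ConvexOn ℝ Set.univ ℓ)
    (hdiff : Differentiable ℝ ℓ) (μ z : Fin d → ℝ) :
    ℓ μ - ℓ z ≤ fderiv ℝ ℓ μ (μ - z) := by
  set ψ : ℝ → ℝ := fun t => ℓ (μ + t • (z - μ)) with hψ
  have hc : HasDerivAt (fun t : ℝ => μ + t • (z - μ)) (z - μ) 0 := by
    simpa using ((hasDerivAt_id (0:ℝ)).smul_const (z - μ)).const_add μ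
  have hder : HasDerivAt ψ (fderiv ℝ ℓ μ (z - μ)) 0 := by
    have h1 : HasFDerivAt ℓ (fderiv ℝ ℓ μ) (μ + (0:ℝ) • (z - μ)) := by
      simpa using (hdiff μ).hasFDerivAt
    simpa [Function.comp_def, hψ] using h1.comp_hasDerivAt 0 hc
  have hψconv : ConvexOn ℝ Set.univ ψ := by
    have := hconv.comp_affineMap
      (AffineMap.lineMap μ z : ℝ →ᵃ[ℝ] (Fin d → ℝ))
    have he : ψ = ℓ ∘ (AffineMap.lineMap μ z : ℝ →ᵃ[ℝ] (Fin d → ℝ)) := by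
      funext t
      simp only [hψ, Function.comp_apply, AffineMap.lineMap_apply_module]
      congr 1
      module
    rw [he]
    simpa using this
  have hs := hψconv.deriv_le_slope (Set.mem_univ 0) (Set.mem_univ 1) zero_lt_one
    hder.differentiableAt
  rw [hder.deriv] at hs
  have hslope : slope ψ 0 1 = ℓ z - ℓ μ := by
    simp [slope, hψ]
  rw [hslope] at hs
  have heq : fderiv ℝ ℓ μ (μ - z) = -(fderiv ℝ ℓ μ (z - μ)) := by
    rw [← map_neg, neg_sub]
  linarith [heq, hs]

lemma proj_dot {m d : ℕ} (A : Matrix (Fin m) (Fin d) ℝ) (g v : Fin d → ℝ)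
    (hv : A *ᵥ v = 0) : g ⬝ᵥ v = (projMat A *ᵥ g) ⬝ᵥ v := by
  have hsym : (projMat A)ᵀ = projMat A := by
    unfold projMat
    rw [transpose_sub, transpose_one, transpose_mul, transpose_mul,
      transpose_transpose, transpose_nonsing_inv, transpose_mul, transpose_transpose,
      Matrix.mul_assoc]
  have hfix : projMat A *ᵥ v = v := by
    unfold projMat
    rw [Matrix.sub_mulVec, Matrix.one_mulVec, Matrix.mul_assoc,
      ← Matrix.mulVec_mulVec, ← Matrix.mulVec_mulVec, hv]
    simp
  calc g ⬝ᵥ v = g ⬝ᵥ (projMat A *ᵥ v) := by rw [hfix]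
    _ = (g ᵥ* projMat A) ⬝ᵥ v := by rw [Matrix.dotProduct_mulVec]
    _ = ((projMat A)ᵀ *ᵥ g) ⬝ᵥ v := by rw [Matrix.mulVec_transpose]
    _ = (projMat A *ᵥ g) ⬝ᵥ v := by rw [hsym]

lemma grad_entropyReg {d : ℕ} (ℓ : (Fin d → ℝ) → ℝ) (hdiff : Differentiable ℝ ℓ)
    (τ : ℝ) (μ : Fin d → ℝ) (hμpos : ∀ k, 0 < μ k) (k : Fin d) :
    grad (fun x => ℓ x - τ * shannonEntropy x) μ k
      = grad ℓ μ k + τ * (Real.log (μ k) + 1) := by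
  have hS : HasFDerivAt (fun x : Fin d → ℝ => ∑ j, x j * Real.log (x j))
      (∑ j, (Real.log (μ j) + 1) • (ContinuousLinearMap.proj j :
        (Fin d → ℝ) →L[ℝ] ℝ)) μ := by
    apply HasFDerivAt.fun_sum
    intro j _
    exact (Real.hasDerivAt_mul_log (hμpos j).ne').comp_hasFDerivAt μ
      ((ContinuousLinearMap.proj j : (Fin d → ℝ) →L[ℝ] ℝ).hasFDerivAt)
  have hF : HasFDerivAt (fun x => ℓ x - τ * shannonEntropy x)
      (fderiv ℝ ℓ μ + τ • (∑ j, (Real.log (μ j) + 1) • (ContinuousLinearMap.proj j :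
        (Fin d → ℝ) →L[ℝ] ℝ))) μ := by
    have h2 : HasFDerivAt (fun x : Fin d → ℝ => τ * shannonEntropy x)
        (τ • (-(∑ j, (Real.log (μ j) + 1) • (ContinuousLinearMap.proj j :
          (Fin d → ℝ) →L[ℝ] ℝ)))) μ := (hS.neg.const_mul τ)
    have := (hdiff μ).hasFDerivAt.sub h2
    exact this.congr_fderiv (by simp [sub_neg_eq_add, smul_neg])
  have hg := hF.fderiv
  unfold grad
  rw [hg]
  simp [ContinuousLinearMap.sum_apply, Pi.single_apply, Finset.sum_ite_eq',
    mul_add]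

lemma neg_sum_log_ge {d : ℕ} (hd : 1 ≤ d) (μ : Fin d → ℝ)
    (hμ : μ ∈ stdSimplex ℝ (Fin d)) (hpos : ∀ k, 0 < μ k) :
    -Real.log d ≤ ∑ k, μ k * Real.log (μ k) := by
  have hdpos : (0:ℝ) < d := by exact_mod_cast hd
  have key : ∀ k, μ k - 1 / d ≤ μ k * Real.log (d * μ k) := by
    intro k
    have hdμ : (0:ℝ) < d * μ k := mul_pos hdpos (hpos k)
    have h1 : Real.log (1 / (d * μ k)) ≤ 1 / (d * μ k) - 1 :=
      Real.log_le_sub_one_of_pos (div_pos one_pos hdμ)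
    have h2 : 1 - 1 / (d * μ k) ≤ Real.log (d * μ k) := by
      rw [Real.log_div one_ne_zero hdμ.ne', Real.log_one] at h1
      linarith
    have hmul := mul_le_mul_of_nonneg_left h2 (hpos k).le
    have heq : μ k * (1 - 1 / (d * μ k)) = μ k - 1 / d := by
      have hne : (d:ℝ) ≠ 0 := hdpos.ne'
      have hne2 : μ k ≠ 0 := (hpos k).ne'
      field_simp
    linarith
  have hsum : ∑ k, (μ k - 1 / (d:ℝ)) ≤ ∑ k, μ k * Real.log ((d:ℝ) * μ k) :=
    Finset.sum_le_sum (fun k _ => key k)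
  have hμ1 : ∑ k, μ k = 1 := hμ.2
  have hleft : ∑ k, (μ k - 1 / (d:ℝ)) = 0 := by
    rw [Finset.sum_sub_distrib, hμ1, Finset.sum_const, Finset.card_univ]
    simp
    field_simp
    norm_num
  have hright : ∑ k, μ k * Real.log (d * μ k)
      = Real.log d + ∑ k, μ k * Real.log (μ k) := by
    have : ∀ k, μ k * Real.log ((d:ℝ) * μ k)
        = μ k * Real.log d + μ k * Real.log (μ k) := by
      intro k
      rw [Real.log_mul hdpos.ne' (hpos k).ne', mul_add]
    rw [Finset.sum_congr rfl (fun k _ => this k), Finset.sum_add_distrib,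
      ← Finset.sum_mul, hμ1, one_mul]
  rw [hleft, hright] at hsum
  linarith

lemma dist_sq_le_two {d : ℕ} (μ z : Fin d → ℝ)
    (hμ : μ ∈ stdSimplex ℝ (Fin d)) (hz : z ∈ stdSimplex ℝ (Fin d)) :
    ∑ k, (μ k - z k) ^ 2 ≤ 2 := by
  have hμ1 : ∑ k, μ k = 1 := hμ.2
  have hz1 : ∑ k, z k = 1 := hz.2
  have hle : ∀ k, (μ k - z k) ^ 2 ≤ μ k + z k - 2 * (μ k * z k) := by
    intro k
    have h1 : μ k ≤ 1 := by
      calc μ k ≤ ∑ j, μ j := Finset.single_le_sum (fun j _ => hμ.1 j) (Finset.mem_univ k)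
        _ = 1 := hμ1
    have h2 : z k ≤ 1 := by
      calc z k ≤ ∑ j, z j := Finset.single_le_sum (fun j _ => hz.1 j) (Finset.mem_univ k)
        _ = 1 := hz1
    have hμ0 := hμ.1 k
    have hz0 := hz.1 k
    nlinarith
  calc ∑ k, (μ k - z k) ^ 2 ≤ ∑ k, (μ k + z k - 2 * (μ k * z k)) :=
        Finset.sum_le_sum (fun k _ => hle k)
    _ = 2 - 2 * ∑ k, μ k * z k := by
        rw [Finset.sum_sub_distrib, Finset.sum_add_distrib, hμ1, hz1, ← Finset.mul_sum]
        ring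
    _ ≤ 2 := by
        have : 0 ≤ ∑ k, μ k * z k :=
          Finset.sum_nonneg fun k _ => mul_nonneg (hμ.1 k) (hz.1 k)
        linarith

/-- Entropy-regularized loss bound: if `μ ∈ M = {x ∈ Δ^{d−1} : Ax = b}` has strictly
positive coordinates, `ℓ` is convex and differentiable, and `τ > 0`, then
`ℓ(μ) − min_{z ∈ M} ℓ(z) ≤ τ log d + √2 ⬝ ‖Π_A ∇ℓ^τ(μ)‖₂` with
`ℓ^τ(x) = ℓ(x) − τ H(x)`. -/
theorem entropy_regularized_loss_bounds_exploitability
    {m d : ℕ} (hd : 1 ≤ d) (A : Matrix (Fin m) (Fin d) ℝ) (hA : A.rank = m)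
    (b : Fin m → ℝ)
    (hM : {x : Fin d → ℝ | x ∈ stdSimplex ℝ (Fin d) ∧ A *ᵥ x = b}.Nonempty)
    (ℓ : (Fin d → ℝ) → ℝ)
    (hconv : ConvexOn ℝ Set.univ ℓ) (hdiff : Differentiable ℝ ℓ)
    (τ : ℝ) (hτ : 0 < τ)
    (μ : Fin d → ℝ)
    (hμ : μ ∈ stdSimplex ℝ (Fin d)) (hμb : A *ᵥ μ = b)
    (hμpos : ∀ k, 0 < μ k) :
    ℓ μ - sInf (ℓ '' {x : Fin d → ℝ | x ∈ stdSimplex ℝ (Fin d) ∧ A *ᵥ x = b}) ≤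
      τ * Real.log d +
        Real.sqrt 2 *
          Real.sqrt
            (∑ k, (projMat A *ᵥ grad (fun x => ℓ x - τ * shannonEntropy x) μ) k ^ 2) := by
  set g : Fin d → ℝ := grad (fun x => ℓ x - τ * shannonEntropy x) μ with hgdef
  set B : ℝ := τ * Real.log d +
      Real.sqrt 2 * Real.sqrt (∑ k, (projMat A *ᵥ g) k ^ 2) with hBdef
  have hmain : ∀ z, z ∈ stdSimplex ℝ (Fin d) → A *ᵥ z = b → ℓ μ - B ≤ ℓ z := by
    intro z hz hzb
    have h1 : ℓ μ - ℓ z ≤ fderiv ℝ ℓ μ (μ - z) := convex_grad_ineq ℓ hconv hdiff μ z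
    have h3 : ∀ k, grad ℓ μ k = g k - τ * (Real.log (μ k) + 1) := by
      intro k; rw [hgdef, grad_entropyReg ℓ hdiff τ μ hμpos k]; ring
    have h4 : fderiv ℝ ℓ μ (μ - z) =
        (∑ k, g k * (μ k - z k)) - τ * ∑ k, (μ k - z k) * (Real.log (μ k) + 1) := by
      rw [clm_apply_eq_sum, Finset.mul_sum, ← Finset.sum_sub_distrib]
      refine Finset.sum_congr rfl fun k _ => ?_
      have : (fderiv ℝ ℓ μ) (Pi.single k 1) = grad ℓ μ k := rfl
      rw [Pi.sub_apply, this, h3 k]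
      ring
    have h5 : -Real.log d ≤ ∑ k, (μ k - z k) * (Real.log (μ k) + 1) := by
      have e1 : ∑ k, (μ k - z k) * (Real.log (μ k) + 1)
          = ∑ k, (μ k * Real.log (μ k) - z k * Real.log (μ k) + (μ k - z k)) :=
        Finset.sum_congr rfl fun k _ => by ring
      have hzlog : ∑ k, z k * Real.log (μ k) ≤ 0 := by
        apply Finset.sum_nonpos
        intro k _
        have hμle1 : μ k ≤ 1 := by
          calc μ k ≤ ∑ j, μ j := Finset.single_le_sum (fun j _ => hμ.1 j) (Finset.mem_univ k)
            _ = 1 := hμ.2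
        exact mul_nonpos_of_nonneg_of_nonpos (hz.1 k)
          (Real.log_nonpos (hμpos k).le hμle1)
      have hμlog := neg_sum_log_ge hd μ hμ hμpos
      rw [e1, Finset.sum_add_distrib, Finset.sum_sub_distrib, Finset.sum_sub_distrib,
        hμ.2, hz.2]
      linarith
    have h6 : ∑ k, g k * (μ k - z k) ≤
        Real.sqrt (∑ k, (projMat A *ᵥ g) k ^ 2) * Real.sqrt 2 := by
      have hker : A *ᵥ (μ - z) = 0 := by
        rw [Matrix.mulVec_sub, hμb, hzb, sub_self]
      have hdot : ∑ k, g k * (μ k - z k) = ∑ k, (projMat A *ᵥ g) k * (μ k - z k) := by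
        have hpd := proj_dot A g (μ - z) hker
        simpa [dotProduct, Pi.sub_apply] using hpd
      rw [hdot]
      have hCS := Real.sum_mul_le_sqrt_mul_sqrt Finset.univ
        (fun k => (projMat A *ᵥ g) k) (fun k => μ k - z k)
      refine hCS.trans ?_
      exact mul_le_mul_of_nonneg_left
        (Real.sqrt_le_sqrt (dist_sq_le_two μ z hμ hz)) (Real.sqrt_nonneg _)
    have hτlog : -(τ * ∑ k, (μ k - z k) * (Real.log (μ k) + 1)) ≤ τ * Real.log d := by
      have := mul_le_mul_of_nonneg_left h5 hτ.le
      rw [mul_neg] at this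
      linarith
    have hcomm : Real.sqrt (∑ k, (projMat A *ᵥ g) k ^ 2) * Real.sqrt 2
        = Real.sqrt 2 * Real.sqrt (∑ k, (projMat A *ᵥ g) k ^ 2) := mul_comm _ _
    rw [hBdef]
    rw [h4] at h1
    linarith [hcomm ▸ h6]
  rw [sub_le_comm]
  apply le_csInf (hM.image ℓ)
  rintro y ⟨z, ⟨hz, hzb⟩, rfl⟩
  exact hmain z hz hzb
end

section
/- Let A be a real m×d matrix with full row rank m, b ∈ ℝ^m, and let f : ℝ^d → ℝ be concave and differentiable. Let x ∈ ℝ^d satisfy x_k > 0 for every k and Ax = b. Then x maximizes f over the feasible set {z ∈ ℝ^d : z ≥ 0 componentwise, Az = b} if and only if Π_A ∇f(x) = 0. -/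
open Matrix

lemma isUnit_AAT {m d : ℕ} (A : Matrix (Fin m) (Fin d) ℝ) (hA : A.rank = m) :
    IsUnit (A * Aᵀ).det := by
  have h1 : (A * Aᵀ).rank = m := by rw [Matrix.rank_self_mul_transpose, hA]
  have h2 : LinearMap.range (A * Aᵀ).mulVecLin = ⊤ := by
    apply Submodule.eq_top_of_finrank_eq
    rw [← Matrix.rank]
    simp [h1]
  have h3 : Function.Surjective ((A * Aᵀ).mulVec) := by
    intro y
    obtain ⟨v, hv⟩ := LinearMap.range_eq_top.mp h2 y
    exact ⟨v, hv⟩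
  rw [← Matrix.isUnit_iff_isUnit_det]
  exact Matrix.mulVec_surjective_iff_isUnit.mp h3

lemma fderiv_eq_dot {d : ℕ} (f : (Fin d → ℝ) → ℝ) (x v : Fin d → ℝ) :
    fderiv ℝ f x v = grad f x ⬝ᵥ v := by
  have hv : v = ∑ i, v i • (Pi.single i (1:ℝ) : Fin d → ℝ) := by
    ext j
    simp [Pi.single_apply, Finset.sum_apply]
  conv_lhs => rw [hv]
  rw [map_sum]
  simp [grad, dotProduct, mul_comm]

lemma hasDerivAt_line {d : ℕ} (f : (Fin d → ℝ) → ℝ) (hdiff : Differentiable ℝ f)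
    (x v : Fin d → ℝ) :
    HasDerivAt (fun s : ℝ => f (x + s • v)) (fderiv ℝ f x v) 0 := by
  have hc : HasDerivAt (fun s : ℝ => x + s • v) v 0 := by
    simpa using ((hasDerivAt_id (0:ℝ)).smul_const v).const_add x
  have h2 : HasFDerivAt f (fderiv ℝ f x) (x + (0:ℝ) • v) := by
    simpa using (hdiff x).hasFDerivAt
  exact h2.comp_hasDerivAt 0 hc

lemma mul_proj {m d : ℕ} (A : Matrix (Fin m) (Fin d) ℝ) (h : IsUnit (A * Aᵀ).det) :
    A * projMat A = 0 := by
  unfold projMat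
  rw [Matrix.mul_sub, Matrix.mul_one]
  rw [show A * (Aᵀ * (A * Aᵀ)⁻¹ * A) = (A * Aᵀ) * (A * Aᵀ)⁻¹ * A by
    simp only [Matrix.mul_assoc]]
  rw [Matrix.mul_nonsing_inv _ h, Matrix.one_mul, sub_self]

lemma proj_symm {m d : ℕ} (A : Matrix (Fin m) (Fin d) ℝ) : (projMat A)ᵀ = projMat A := by
  unfold projMat
  rw [Matrix.transpose_sub, Matrix.transpose_one, Matrix.transpose_mul, Matrix.transpose_mul,
    Matrix.transpose_transpose, Matrix.transpose_nonsing_inv]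
  rw [show (A * Aᵀ)ᵀ = A * Aᵀ by rw [Matrix.transpose_mul, Matrix.transpose_transpose]]
  rw [Matrix.mul_assoc]

lemma proj_idem {m d : ℕ} (A : Matrix (Fin m) (Fin d) ℝ) (h : IsUnit (A * Aᵀ).det) :
    projMat A * projMat A = projMat A := by
  conv_lhs => rw [show projMat A * projMat A = projMat A - Aᵀ * (A * Aᵀ)⁻¹ * (A * projMat A) by
    unfold projMat; rw [Matrix.sub_mul, Matrix.one_mul]; simp only [Matrix.mul_assoc]]
  rw [mul_proj A h, Matrix.mul_zero, sub_zero]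

lemma concave_grad_ineq {d : ℕ} (f : (Fin d → ℝ) → ℝ) (hconc : ConcaveOn ℝ Set.univ f)
    (hdiff : Differentiable ℝ f) (x z : Fin d → ℝ) :
    f z ≤ f x + fderiv ℝ f x (z - x) := by
  set φ : ℝ → ℝ := fun t => f (x + t • (z - x)) with hφ
  have hφconc : ConcaveOn ℝ Set.univ φ := by
    have := hconc.comp_affineMap (AffineMap.lineMap x z)
    have heq : φ = f ∘ (AffineMap.lineMap x z) := by
      funext t
      simp [hφ, AffineMap.lineMap_apply, add_comm]
    rw [heq]
    simpa using this
  have hD : HasDerivAt φ (fderiv ℝ f x (z - x)) 0 := hasDerivAt_line f hdiff x (z - x)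
  have hcv : ConvexOn ℝ Set.univ (fun t => -(φ t)) := hφconc.neg
  have h := hcv.le_slope_of_hasDerivAt (Set.mem_univ 0) (Set.mem_univ 1) one_pos hD.neg
  have h0 : φ 0 = f x := by simp [hφ]
  have h1 : φ 1 = f z := by simp [hφ]
  simp only [slope_def_field, sub_zero, div_one] at h
  linarith [h, h0, h1]

/-- KKT conditions: a strictly positive feasible point `x` (with `Ax = b`) maximizes a
concave differentiable `f` over `{z : z ≥ 0, Az = b}` iff `Π_A ∇f(x) = 0`. -/
theorem positive_feasible_maximizer_iff_proj_grad_zero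
    {m d : ℕ} (A : Matrix (Fin m) (Fin d) ℝ) (hA : A.rank = m)
    (b : Fin m → ℝ) (f : (Fin d → ℝ) → ℝ)
    (hconc : ConcaveOn ℝ Set.univ f) (hdiff : Differentiable ℝ f)
    (x : Fin d → ℝ) (hxpos : ∀ k, 0 < x k) (hxb : A *ᵥ x = b) :
    (∀ z : Fin d → ℝ, (∀ k, 0 ≤ z k) → A *ᵥ z = b → f z ≤ f x) ↔
      projMat A *ᵥ grad f x = 0 := by
  have hU : IsUnit (A * Aᵀ).det := isUnit_AAT A hA
  set g : Fin d → ℝ := grad f x with hg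
  constructor
  · intro hmax
    -- gradient is orthogonal to kernel of A
    have key : ∀ v : Fin d → ℝ, A *ᵥ v = 0 → g ⬝ᵥ v = 0 := by
      intro v hv
      rw [hg, ← fderiv_eq_dot]
      have hD : HasDerivAt (fun s : ℝ => f (x + s • v)) (fderiv ℝ f x v) 0 :=
        hasDerivAt_line f hdiff x v
      have hloc : IsLocalMax (fun s : ℝ => f (x + s • v)) 0 := by
        have hopen : IsOpen {y : Fin d → ℝ | ∀ k, 0 < y k} := by
          have : {y : Fin d → ℝ | ∀ k, 0 < y k} = ⋂ k, {y : Fin d → ℝ | 0 < y k} := by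
            ext y; simp
          rw [this]
          exact isOpen_iInter_of_finite fun k =>
            isOpen_lt continuous_const (continuous_apply k)
        have hcont : Continuous (fun s : ℝ => x + s • v) := by continuity
        have hmem : (fun s : ℝ => x + s • v) ⁻¹' {y : Fin d → ℝ | ∀ k, 0 < y k} ∈ nhds (0:ℝ) := by
          refine (hopen.preimage hcont).mem_nhds ?_
          simpa using hxpos
        filter_upwards [hmem] with t ht
        have hfeas : A *ᵥ (x + t • v) = b := by
          rw [Matrix.mulVec_add, Matrix.mulVec_smul, hv, hxb]
          simp
        have := hmax (x + t • v) (fun k => (ht k).le) hfeas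
        simpa using this
      have := hloc.deriv_eq_zero
      rw [hD.deriv] at this
      exact this
    -- Π g lies in the kernel of A
    have hker : A *ᵥ (projMat A *ᵥ g) = 0 := by
      rw [Matrix.mulVec_mulVec, mul_proj A hU, Matrix.zero_mulVec]
    have h1 : g ⬝ᵥ (projMat A *ᵥ g) = 0 := key _ hker
    have h2 : (projMat A *ᵥ g) ⬝ᵥ (projMat A *ᵥ g) = 0 := by
      calc (projMat A *ᵥ g) ⬝ᵥ (projMat A *ᵥ g)
          = (g ᵥ* projMat A) ⬝ᵥ (projMat A *ᵥ g) := by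
            rw [← Matrix.mulVec_transpose, proj_symm A]
        _ = g ⬝ᵥ (projMat A *ᵥ (projMat A *ᵥ g)) :=
            (Matrix.dotProduct_mulVec g (projMat A) (projMat A *ᵥ g)).symm
        _ = g ⬝ᵥ (projMat A *ᵥ g) := by
            rw [Matrix.mulVec_mulVec, proj_idem A hU]
        _ = 0 := h1
    exact dotProduct_self_eq_zero.mp h2
  · intro hP z hz hAz
    have hrep : g = (Aᵀ * (A * Aᵀ)⁻¹ * A) *ᵥ g := by
      have : projMat A *ᵥ g = g - (Aᵀ * (A * Aᵀ)⁻¹ * A) *ᵥ g := by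
        unfold projMat
        rw [Matrix.sub_mulVec, Matrix.one_mulVec]
      rw [this] at hP
      exact sub_eq_zero.mp hP
    have hineq := concave_grad_ineq f hconc hdiff x z
    have hzero : fderiv ℝ f x (z - x) = 0 := by
      rw [fderiv_eq_dot, ← hg]
      conv_lhs => rw [hrep]
      rw [Matrix.mul_assoc, ← Matrix.mulVec_mulVec, Matrix.mulVec_transpose,
        ← Matrix.dotProduct_mulVec]
      have : A *ᵥ (z - x) = 0 := by
        rw [Matrix.mulVec_sub, hAz, hxb, sub_self]
      rw [this, dotProduct_zero]
    rw [hzero, add_zero] at hineq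
    exact hineq
end
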